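/- Let S = (N, M0) be a WMG≤ system without source places. Then S is live if and only if every elementary circuit P-subsystem of S is live. -/

import Mathlib

open scoped Classical

structure PetriNet (P T : Type) where
  pre : P → T → ℕ
  post : T → P → ℕ

namespace PetriNet

variable {P T : Type}

def enabled (N : PetriNet P T) (M : P → ℕ) (t : T) : Prop :=
  ∀ p, N.pre p t ≤ M p

def fire (N : PetriNet P T) (M : P → ℕ) (t : T) : P → ℕ :=
  fun p => M p - N.pre p t + N.post t p

def feasible (N : PetriNet P T) : (P → ℕ) → List T → (P → ℕ) → Prop
  | M, [], M' => M' = M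
  | M, t :: σ, M' => N.enabled M t ∧ feasible N (N.fire M t) σ M'

def reachable (N : PetriNet P T) (M0 M : P → ℕ) : Prop :=
  ∃ σ : List T, N.feasible M0 σ M

def inc (N : PetriNet P T) (p : P) (t : T) : ℤ :=
  (N.post t p : ℤ) - (N.pre p t : ℤ)

def potReach [Fintype T] (N : PetriNet P T) (M0 M : P → ℕ) : Prop :=
  ∃ Y : T → ℕ, ∀ p, (M p : ℤ) = (M0 p : ℤ) + ∑ t, N.inc p t * (Y t : ℤ)

def live (N : PetriNet P T) (M0 : P → ℕ) : Prop :=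
  ∀ (t : T) (M : P → ℕ), N.reachable M0 M →
    ∃ M', N.reachable M M' ∧ N.enabled M' t

def bounded (N : PetriNet P T) (M0 : P → ℕ) : Prop :=
  ∃ k : ℕ, ∀ M : P → ℕ, N.reachable M0 M → ∀ p, M p ≤ k

def reversible (N : PetriNet P T) (M0 : P → ℕ) : Prop :=
  ∀ M : P → ℕ, N.reachable M0 M → N.reachable M M0

def rev (N : PetriNet P T) : PetriNet P T :=
  ⟨fun p t => N.post t p, fun t p => N.pre p t⟩

def propR (N : PetriNet P T) (M0 : P → ℕ) : Prop :=
  N.reversible M0 ∧ N.rev.reversible M0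

def placePre [Fintype T] (N : PetriNet P T) (p : P) : Finset T :=
  Finset.univ.filter fun t => 0 < N.post t p

def placePost [Fintype T] (N : PetriNet P T) (p : P) : Finset T :=
  Finset.univ.filter fun t => 0 < N.pre p t

def transPre [Fintype P] (N : PetriNet P T) (t : T) : Finset P :=
  Finset.univ.filter fun p => 0 < N.pre p t

def transPost [Fintype P] (N : PetriNet P T) (t : T) : Finset P :=
  Finset.univ.filter fun p => 0 < N.post t p

def arc (N : PetriNet P T) : (P ⊕ T) → (P ⊕ T) → Prop
  | Sum.inl p, Sum.inr t => 0 < N.pre p t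
  | Sum.inr t, Sum.inl p => 0 < N.post t p
  | _, _ => False

def stronglyConnected (N : PetriNet P T) : Prop :=
  ∀ x y : P ⊕ T, Relation.ReflTransGen N.arc x y

def connectedNet (N : PetriNet P T) : Prop :=
  ∀ x y : P ⊕ T, Relation.ReflTransGen (fun a b => N.arc a b ∨ N.arc b a) x y

def ordinary (N : PetriNet P T) : Prop :=
  ∀ p t, N.pre p t ≤ 1 ∧ N.post t p ≤ 1

def isWMGle [Fintype T] (N : PetriNet P T) : Prop :=
  ∀ p, (N.placePre p).card ≤ 1 ∧ (N.placePost p).card ≤ 1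

def deadlock (N : PetriNet P T) (M : P → ℕ) : Prop :=
  ∀ t, ¬ N.enabled M t

end PetriNet


namespace PetriNet

variable {P T : Type}

/-- A transition is adjacent to the place set `D`. -/
def adjT (N : PetriNet P T) (D : Finset P) (t : T) : Prop :=
  ∃ p ∈ D, 0 < N.pre p t ∨ 0 < N.post t p

/-- The P-subnet induced by the place set `D`:
its transitions are those adjacent to `D`, weights are restricted. -/
def psubnet (N : PetriNet P T) (D : Finset P) :
    PetriNet {p : P // p ∈ D} {t : T // N.adjT D t} :=
  ⟨fun p t => N.pre p.1 t.1, fun t p => N.post t.1 p.1⟩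

/-- The net is a single directed cycle visiting each node exactly once. -/
def isCircuitNet [Fintype P] [Fintype T] (N : PetriNet P T) : Prop :=
  Nonempty (P ⊕ T) ∧ N.stronglyConnected ∧
  (∀ p, (N.placePre p).card = 1 ∧ (N.placePost p).card = 1) ∧
  (∀ t, (N.transPre t).card = 1 ∧ (N.transPost t).card = 1)

end PetriNet


namespace PetriNet

variable {P T : Type}

lemma feasible_nil (N : PetriNet P T) (M : P → ℕ) : N.feasible M [] M := rfl

lemma feasible_append (N : PetriNet P T) {M M' M'' : P → ℕ} {σ σ' : List T}
    (h : N.feasible M σ M') (h' : N.feasible M' σ' M'') :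
    N.feasible M (σ ++ σ') M'' := by
  induction σ generalizing M with
  | nil => cases h; exact h'
  | cons t σ ih => exact ⟨h.1, ih h.2⟩

lemma reachable_refl (N : PetriNet P T) (M : P → ℕ) : N.reachable M M := ⟨[], rfl⟩

lemma reachable_trans (N : PetriNet P T) {M M' M'' : P → ℕ}
    (h : N.reachable M M') (h' : N.reachable M' M'') : N.reachable M M'' := by
  obtain ⟨σ, hσ⟩ := h; obtain ⟨σ', hσ'⟩ := h'
  exact ⟨σ ++ σ', N.feasible_append hσ hσ'⟩

lemma reachable_fire (N : PetriNet P T) {M : P → ℕ} {t : T} (h : N.enabled M t) :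
    N.reachable M (N.fire M t) := ⟨[t], h, rfl⟩

lemma feasible_snoc (N : PetriNet P T) {M M' : P → ℕ} {σ : List T} {t : T}
    (h : N.feasible M σ M') (h' : N.enabled M' t) :
    N.feasible M (σ ++ [t]) (N.fire M' t) :=
  N.feasible_append h ⟨h', rfl⟩

lemma feasible_snoc_elim (N : PetriNet P T) {M M'' : P → ℕ} {σ : List T} {t : T}
    (h : N.feasible M (σ ++ [t]) M'') :
    ∃ M', N.feasible M σ M' ∧ N.enabled M' t ∧ M'' = N.fire M' t := by
  induction σ generalizing M with
  | nil =>
      obtain ⟨he, hf⟩ := h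
      cases hf
      exact ⟨M, rfl, he, rfl⟩
  | cons u σ ih =>
      obtain ⟨he, hf⟩ := h
      obtain ⟨M', h1, h2, h3⟩ := ih hf
      exact ⟨M', ⟨he, h1⟩, h2, h3⟩

/-- Transitions never fired have no effect; a place consumed by no fired
transition is nondecreasing. -/
lemma mono_place (N : PetriNet P T) {M M' : P → ℕ} {σ : List T} (p : P)
    (hσ : ∀ u ∈ σ, N.pre p u = 0) (h : N.feasible M σ M') : M p ≤ M' p := by
  induction σ generalizing M with
  | nil => cases h; exact le_refl _
  | cons u σ ih =>
      have h1 := ih (fun v hv => hσ v (List.mem_cons_of_mem _ hv)) h.2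
      refine le_trans ?_ h1
      show M p ≤ M p - N.pre p u + N.post u p
      rw [hσ u List.mem_cons_self]
      omega

/-- If `t` is dead at `M`, no run from `M` contains `t`. -/
lemma dead_not_mem (N : PetriNet P T) {M M' : P → ℕ} {σ : List T} {t : T}
    (hd : ∀ M'', N.reachable M M'' → ¬ N.enabled M'' t)
    (h : N.feasible M σ M') : t ∉ σ := by
  induction σ generalizing M with
  | nil => simp
  | cons u σ ih =>
      intro hmem
      rcases List.mem_cons.1 hmem with rfl | hmem
      · exact hd M (N.reachable_refl M) h.1
      · exact ih (fun M'' hr => hd M'' (N.reachable_trans (N.reachable_fire h.1) hr)) h.2 hmem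

/-- marking evolution equation over ℤ -/
lemma marking_eq [Fintype T] (N : PetriNet P T) {M M' : P → ℕ} {σ : List T}
    (h : N.feasible M σ M') (p : P) :
    (M' p : ℤ) = (M p : ℤ) + ∑ t, N.inc p t * (σ.count t : ℤ) := by
  induction σ generalizing M with
  | nil => cases h; simp
  | cons u σ ih =>
      have h1 := ih h.2
      have hpre : N.pre p u ≤ M p := h.1 p
      have hfire : (N.fire M u p : ℤ) = (M p : ℤ) + N.inc p u := by
        show ((M p - N.pre p u + N.post u p : ℕ) : ℤ) = _
        unfold inc
        push_cast [Nat.cast_sub hpre]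
        ring
      rw [h1, hfire]
      have : ∀ t : T, ((u :: σ).count t : ℤ) = (σ.count t : ℤ) + (if u = t then 1 else 0) := by
        intro t
        rw [List.count_cons]
        split <;> simp_all
      simp only [this]
      rw [Finset.sum_congr rfl (fun t _ => mul_add (N.inc p t) _ _), Finset.sum_add_distrib]
      have : ∑ t, N.inc p t * (if u = t then 1 else 0) = N.inc p u := by
        rw [Finset.sum_congr rfl (fun t _ => by rw [mul_ite, mul_one, mul_zero])]
        simp [Finset.sum_ite_eq]
      rw [this]; ring

lemma length_eq_sum_count [Fintype T] (σ : List T) :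
    σ.length = ∑ t, σ.count t := by
  induction σ with
  | nil => simp
  | cons u σ ih =>
      simp only [List.length_cons, List.count_cons, ih]
      rw [Finset.sum_add_distrib]
      simp [Finset.sum_ite_eq]

end PetriNet
namespace PetriNet

variable {P T : Type}

/-- restriction of a marking to `D` -/
def restr (D : Finset P) (M : P → ℕ) : {p : P // p ∈ D} → ℕ := fun p => M p.1

/-- projection of a firing sequence onto the subnet induced by `D` -/
noncomputable def proj (N : PetriNet P T) (D : Finset P) (σ : List T) :
    List {t : T // N.adjT D t} :=
  σ.filterMap (fun t => if h : N.adjT D t then some ⟨t, h⟩ else none)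

lemma notAdj_zero (N : PetriNet P T) {D : Finset P} {t : T} (h : ¬ N.adjT D t)
    {p : P} (hp : p ∈ D) : N.pre p t = 0 ∧ N.post t p = 0 := by
  unfold adjT at h
  push_neg at h
  have := h p hp
  omega

lemma proj_feasible (N : PetriNet P T) {D : Finset P} {M M' : P → ℕ} {σ : List T}
    (h : N.feasible M σ M') :
    (N.psubnet D).feasible (restr D M) (N.proj D σ) (restr D M') := by
  induction σ generalizing M with
  | nil => cases h; rfl
  | cons u σ ih =>
      by_cases hu : N.adjT D u
      · have : N.proj D (u :: σ) = ⟨u, hu⟩ :: N.proj D σ := by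
          simp [proj, List.filterMap_cons, hu]
        rw [this]
        refine ⟨fun p => h.1 p.1, ?_⟩
        have : (N.psubnet D).fire (restr D M) ⟨u, hu⟩ = restr D (N.fire M u) := rfl
        rw [this]
        exact ih h.2
      · have : N.proj D (u :: σ) = N.proj D σ := by
          simp [proj, List.filterMap_cons, hu]
        rw [this]
        have : restr D (N.fire M u) = restr D M := by
          funext p
          obtain ⟨h1, h2⟩ := N.notAdj_zero hu p.2
          show M p.1 - N.pre p.1 u + N.post u p.1 = M p.1
          rw [h1, h2]; omega
        rw [← this]
        exact ih h.2

lemma proj_reachable (N : PetriNet P T) {D : Finset P} {M M' : P → ℕ}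
    (h : N.reachable M M') :
    (N.psubnet D).reachable (restr D M) (restr D M') := by
  obtain ⟨σ, hσ⟩ := h
  exact ⟨N.proj D σ, N.proj_feasible hσ⟩

lemma proj_count (N : PetriNet P T) {D : Finset P} (σ : List T)
    (t : {t : T // N.adjT D t}) :
    (N.proj D σ).count t = σ.count t.1 := by
  induction σ with
  | nil => rfl
  | cons u σ ih =>
      by_cases hu : N.adjT D u
      · have h1 : N.proj D (u :: σ) = ⟨u, hu⟩ :: N.proj D σ := by
          simp [proj, List.filterMap_cons, hu]
        rw [h1, List.count_cons, List.count_cons, ih]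
        by_cases he : u = t.1
        · subst he; simp
        · have : (⟨u, hu⟩ : {t : T // N.adjT D t}) ≠ t := by
            intro hc; exact he (congrArg Subtype.val hc)
          simp [he, this]
      · have h1 : N.proj D (u :: σ) = N.proj D σ := by
          simp [proj, List.filterMap_cons, hu]
        have hne : u ≠ t.1 := by rintro rfl; exact hu t.2
        rw [h1, List.count_cons, ih]
        simp [hne]

/-- WMG uniqueness: inputs of a place -/
lemma wmg_in_unique [Fintype T] (N : PetriNet P T) (hwmg : N.isWMGle) {p : P} {t t' : T}
    (h : 0 < N.post t p) (h' : 0 < N.post t' p) : t = t' := by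
  have := (hwmg p).1
  have ht : t ∈ N.placePre p := by simp [placePre, h]
  have ht' : t' ∈ N.placePre p := by simp [placePre, h']
  exact Finset.card_le_one.1 this t ht t' ht'

lemma wmg_out_unique [Fintype T] (N : PetriNet P T) (hwmg : N.isWMGle) {p : P} {t t' : T}
    (h : 0 < N.pre p t) (h' : 0 < N.pre p t') : t = t' := by
  have := (hwmg p).2
  have ht : t ∈ N.placePost p := by simp [placePost, h]
  have ht' : t' ∈ N.placePost p := by simp [placePost, h']
  exact Finset.card_le_one.1 this t ht t' ht'

end PetriNet
namespace PetriNet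

variable {P T : Type}

/-- From a live system one can fire any prescribed multiset of transitions. -/
lemma live_pump (N : PetriNet P T) {M0 : P → ℕ} (hl : N.live M0) (L : List T) :
    ∀ M, N.reachable M0 M → ∃ σ M', N.feasible M σ M' ∧ ∀ t, L.count t ≤ σ.count t := by
  induction L with
  | nil => intro M _; exact ⟨[], M, rfl, by simp⟩
  | cons u L ih =>
      intro M hM
      obtain ⟨M1, hr1, he1⟩ := hl u M hM
      obtain ⟨σ1, hσ1⟩ := hr1
      set M2 := N.fire M1 u with hM2
      have hf2 : N.feasible M (σ1 ++ [u]) M2 := N.feasible_snoc hσ1 he1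
      have hM2r : N.reachable M0 M2 := N.reachable_trans hM ⟨_, hf2⟩
      obtain ⟨σ', M', hf', hc'⟩ := ih M2 hM2r
      refine ⟨(σ1 ++ [u]) ++ σ', M', N.feasible_append hf2 hf', ?_⟩
      intro t
      have := hc' t
      rw [List.count_append, List.count_append, List.count_cons]
      rcases eq_or_ne u t with rfl | hne
      · simp; omega
      · simp [hne, List.count_singleton]
        omega

end PetriNet
namespace PetriNet

variable {P T : Type} [Fintype P] [Fintype T]

section Circuit

variable (C : PetriNet P T) (hc : C.isCircuitNet)

/-- the unique input place of a transition in a circuit net -/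
noncomputable def pin (t : T) : P := (Finset.card_eq_one.mp (hc.2.2.2 t).1).choose

/-- the unique output place of a transition in a circuit net -/
noncomputable def pout (t : T) : P := (Finset.card_eq_one.mp (hc.2.2.2 t).2).choose

/-- the unique input transition of a place in a circuit net -/
noncomputable def inn (q : P) : T := (Finset.card_eq_one.mp (hc.2.2.1 q).1).choose

/-- the unique output transition of a place in a circuit net -/
noncomputable def out (q : P) : T := (Finset.card_eq_one.mp (hc.2.2.1 q).2).choose

lemma pin_pos (t : T) : 0 < C.pre (C.pin hc t) t := by
  have h := (Finset.card_eq_one.mp (hc.2.2.2 t).1).choose_spec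
  have hmem : C.pin hc t ∈ C.transPre t := by
    rw [h]; exact Finset.mem_singleton.mpr rfl
  exact (Finset.mem_filter.mp hmem).2

lemma pin_unique {t : T} {p : P} (h : 0 < C.pre p t) : p = C.pin hc t := by
  have hs := (Finset.card_eq_one.mp (hc.2.2.2 t).1).choose_spec
  have hmem : p ∈ C.transPre t := Finset.mem_filter.mpr ⟨Finset.mem_univ _, h⟩
  rw [hs] at hmem
  exact Finset.mem_singleton.mp hmem

lemma pout_pos (t : T) : 0 < C.post t (C.pout hc t) := by
  have h := (Finset.card_eq_one.mp (hc.2.2.2 t).2).choose_spec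
  have hmem : C.pout hc t ∈ C.transPost t := by
    rw [h]; exact Finset.mem_singleton.mpr rfl
  exact (Finset.mem_filter.mp hmem).2

lemma pout_unique {t : T} {p : P} (h : 0 < C.post t p) : p = C.pout hc t := by
  have hs := (Finset.card_eq_one.mp (hc.2.2.2 t).2).choose_spec
  have hmem : p ∈ C.transPost t := Finset.mem_filter.mpr ⟨Finset.mem_univ _, h⟩
  rw [hs] at hmem
  exact Finset.mem_singleton.mp hmem

lemma inn_pos (q : P) : 0 < C.post (C.inn hc q) q := by
  have h := (Finset.card_eq_one.mp (hc.2.2.1 q).1).choose_spec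
  have hmem : C.inn hc q ∈ C.placePre q := by
    rw [h]; exact Finset.mem_singleton.mpr rfl
  exact (Finset.mem_filter.mp hmem).2

lemma inn_unique {q : P} {t : T} (h : 0 < C.post t q) : t = C.inn hc q := by
  have hs := (Finset.card_eq_one.mp (hc.2.2.1 q).1).choose_spec
  have hmem : t ∈ C.placePre q := Finset.mem_filter.mpr ⟨Finset.mem_univ _, h⟩
  rw [hs] at hmem
  exact Finset.mem_singleton.mp hmem

lemma out_pos (q : P) : 0 < C.pre q (C.out hc q) := by
  have h := (Finset.card_eq_one.mp (hc.2.2.1 q).2).choose_spec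
  have hmem : C.out hc q ∈ C.placePost q := by
    rw [h]; exact Finset.mem_singleton.mpr rfl
  exact (Finset.mem_filter.mp hmem).2

lemma out_unique {q : P} {t : T} (h : 0 < C.pre q t) : t = C.out hc q := by
  have hs := (Finset.card_eq_one.mp (hc.2.2.1 q).2).choose_spec
  have hmem : t ∈ C.placePost q := Finset.mem_filter.mpr ⟨Finset.mem_univ _, h⟩
  rw [hs] at hmem
  exact Finset.mem_singleton.mp hmem

lemma enabled_iff_pin {M : P → ℕ} {t : T} :
    C.enabled M t ↔ C.pre (C.pin hc t) t ≤ M (C.pin hc t) := by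
  constructor
  · intro h; exact h _
  · intro h p
    by_cases hp : 0 < C.pre p t
    · rw [C.pin_unique hc hp] at *; exact h
    · omega

/-- collapse of the incidence sum in a circuit -/
lemma circuit_sum (q : P) (c : T → ℤ) :
    ∑ t, C.inc q t * c t =
      (C.post (C.inn hc q) q : ℤ) * c (C.inn hc q)
        - (C.pre q (C.out hc q) : ℤ) * c (C.out hc q) := by
  have hvanish : ∀ t ∈ Finset.univ,
      t ∉ ({C.inn hc q, C.out hc q} : Finset T) → C.inc q t * c t = 0 := by
    intro t _ ht
    simp only [Finset.mem_insert, Finset.mem_singleton] at ht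
    push_neg at ht
    have h1 : C.post t q = 0 := by
      by_contra h
      exact ht.1 (C.inn_unique hc (Nat.pos_of_ne_zero h))
    have h2 : C.pre q t = 0 := by
      by_contra h
      exact ht.2 (C.out_unique hc (Nat.pos_of_ne_zero h))
    simp [inc, h1, h2]
  rw [← Finset.sum_subset (Finset.subset_univ ({C.inn hc q, C.out hc q} : Finset T)) hvanish]
  rcases eq_or_ne (C.inn hc q) (C.out hc q) with he | he
  · rw [show ({C.inn hc q, C.out hc q} : Finset T) = {C.inn hc q} by rw [← he]; simp]
    rw [Finset.sum_singleton, ← he, inc]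
    ring
  · rw [Finset.sum_insert (by simp [he]), Finset.sum_singleton]
    have h1 : C.pre q (C.inn hc q) = 0 := by
      by_contra h
      exact he (C.out_unique hc (Nat.pos_of_ne_zero h))
    have h2 : C.post (C.out hc q) q = 0 := by
      by_contra h
      exact he (C.inn_unique hc (Nat.pos_of_ne_zero h)).symm
    simp only [inc, h1, h2]
    push_cast
    ring

end Circuit

end PetriNet
namespace PetriNet

variable {P T : Type} [Fintype P] [Fintype T]

section Circuit2

variable (C : PetriNet P T) (hc : C.isCircuitNet)

/-- successor transition around the circuit -/
noncomputable def succt : T → T := fun v => C.out hc (C.pout hc v)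

lemma orbit_covers (t u : T) : ∃ n, (C.succt hc)^[n] t = u := by
  have key : ∀ x, Relation.ReflTransGen C.arc (Sum.inr t) x →
      (∃ n, x = Sum.inr ((C.succt hc)^[n] t)) ∨
      (∃ n, x = Sum.inl (C.pout hc ((C.succt hc)^[n] t))) := by
    intro x hx
    induction hx with
    | refl => exact Or.inl ⟨0, rfl⟩
    | tail hab harc ih =>
        rename_i b c'
        rcases ih with ⟨n, rfl⟩ | ⟨n, rfl⟩
        · cases c' with
          | inl p =>
              have hp : 0 < C.post ((C.succt hc)^[n] t) p := harc
              exact Or.inr ⟨n, congrArg Sum.inl (C.pout_unique hc hp)⟩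
          | inr w => exact harc.elim
        · cases c' with
          | inl p => exact harc.elim
          | inr w =>
              have hw : 0 < C.pre (C.pout hc ((C.succt hc)^[n] t)) w := harc
              refine Or.inl ⟨n + 1, ?_⟩
              rw [Function.iterate_succ_apply']
              exact congrArg Sum.inr (C.out_unique hc hw)
  have h := key (Sum.inr u) (hc.2.1 (Sum.inr t) (Sum.inr u))
  rcases h with ⟨n, hn⟩ | ⟨n, hn⟩
  · exact ⟨n, (Sum.inr.inj hn).symm⟩
  · exact absurd hn (by simp)

/-- recursive bound on firing counts around the circuit from a dead transition -/
noncomputable def Fb (M : P → ℕ) (t : T) : ℕ → ℕ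
  | 0 => 0
  | n + 1 =>
      M (C.pout hc ((C.succt hc)^[n] t)) +
        C.post ((C.succt hc)^[n] t) (C.pout hc ((C.succt hc)^[n] t)) *
          Fb M t n

lemma count_bound (M : P → ℕ) (t : T)
    (hd : ∀ M', C.reachable M M' → ¬ C.enabled M' t) :
    ∀ n (σ : List T) (M' : P → ℕ), C.feasible M σ M' →
      σ.count ((C.succt hc)^[n] t) ≤ C.Fb hc M t n := by
  intro n
  induction n with
  | zero =>
      intro σ M' hf
      simp only [Function.iterate_zero, id_eq, Fb]
      exact Nat.le_zero.mpr (List.count_eq_zero.mpr (C.dead_not_mem hd hf))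
  | succ n ih =>
      intro σ M' hf
      set u : T := (C.succt hc)^[n] t with hu
      set q : P := C.pout hc u with hq
      have hsu : (C.succt hc)^[n+1] t = C.out hc q := by
        rw [Function.iterate_succ_apply']; rfl
      rw [hsu]
      have heq := C.marking_eq hf q
      rw [C.circuit_sum hc q] at heq
      have hinnq : u = C.inn hc q := C.inn_unique hc (C.pout_pos hc u)
      rw [← hinnq] at heq
      have hcnt : (σ.count u : ℤ) ≤ (C.Fb hc M t n : ℤ) := by
        exact_mod_cast ih σ M' hf
      have hpre1 : (1 : ℤ) ≤ (C.pre q (C.out hc q) : ℤ) := by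
        exact_mod_cast C.out_pos hc q
      have hM' : (0 : ℤ) ≤ (M' q : ℤ) := Int.natCast_nonneg _
      have hgoal : (σ.count (C.out hc q) : ℤ) ≤
          (M q : ℤ) + (C.post u q : ℤ) * (C.Fb hc M t n : ℤ) := by
        nlinarith [Int.natCast_nonneg (σ.count (C.out hc q)),
          Int.natCast_nonneg (C.post u q),
          mul_le_mul_of_nonneg_left hcnt (Int.natCast_nonneg (C.post u q))]
      have : (σ.count (C.out hc q) : ℤ) ≤ (C.Fb hc M t (n+1) : ℤ) := by
        have hFb : C.Fb hc M t (n+1) = M q + C.post u q * C.Fb hc M t n := rfl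
        rw [hFb]
        push_cast
        exact hgoal
      exact_mod_cast this

include hc in
lemma circuit_dead_deadlock (M : P → ℕ) (t : T)
    (hd : ∀ M', C.reachable M M' → ¬ C.enabled M' t) :
    ∃ Mhat, C.reachable M Mhat ∧ ∀ u, ¬ C.enabled Mhat u := by
  have horb := C.orbit_covers hc t
  have hlen : ∀ (σ : List T) (M' : P → ℕ), C.feasible M σ M' →
      σ.length ≤ ∑ u : T, C.Fb hc M t (Classical.choose (horb u)) := by
    intro σ M' hf
    rw [length_eq_sum_count]
    refine Finset.sum_le_sum fun u _ => ?_
    have hspec := Classical.choose_spec (horb u)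
    calc σ.count u = σ.count ((C.succt hc)^[Classical.choose (horb u)] t) := by rw [hspec]
    _ ≤ _ := C.count_bound hc M t hd _ σ M' hf
  set S : Set ℕ := {k | ∃ σ M', C.feasible M σ M' ∧ σ.length = k} with hS
  have hS0 : (0 : ℕ) ∈ S := ⟨[], M, rfl, rfl⟩
  have hbdd : BddAbove S := by
    refine ⟨∑ u : T, C.Fb hc M t (Classical.choose (horb u)), ?_⟩
    rintro k ⟨σ, M', hf, rfl⟩
    exact hlen σ M' hf
  have hmem := Nat.sSup_mem ⟨0, hS0⟩ hbdd
  obtain ⟨σ, Mhat, hf, hlen0⟩ := hmem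
  refine ⟨Mhat, ⟨σ, hf⟩, ?_⟩
  intro u he
  have : σ.length + 1 ∈ S := ⟨σ ++ [u], _, C.feasible_snoc hf he, by simp⟩
  have := le_csSup hbdd this
  omega

end Circuit2

end PetriNet
namespace PetriNet

variable {P T : Type} [Fintype P] [Fintype T]

section Circuit3

variable (C : PetriNet P T) (hc : C.isCircuitNet)

include hc in
lemma deadlock_count_bound (M0 : P → ℕ) (α : List T) (Mhat : P → ℕ)
    (hfa : C.feasible M0 α Mhat) (hdl : ∀ u, ¬ C.enabled Mhat u) :
    ∀ (σ : List T) (M' : P → ℕ), C.feasible M0 σ M' → ∀ u, σ.count u ≤ α.count u := by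
  intro σ
  induction σ using List.reverseRecOn with
  | nil => intro M' _ u; simp
  | append_singleton σ t ih =>
      intro M'' h u
      obtain ⟨M1, h1, h2, rfl⟩ := C.feasible_snoc_elim h
      have ihc : ∀ v, σ.count v ≤ α.count v := fun v => ih M1 h1 v
      have key : σ.count t < α.count t := by
        by_contra hlt
        push_neg at hlt
        have heqt : σ.count t = α.count t := le_antisymm (ihc t) hlt
        set q : P := C.pin hc t with hq
        have hout : t = C.out hc q := C.out_unique hc (C.pin_pos hc t)
        have hen : (C.pre q t : ℤ) ≤ (M1 q : ℤ) := by exact_mod_cast h2 q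
        have hineq : (Mhat q : ℤ) < (C.pre q t : ℤ) := by
          have := hdl t
          rw [C.enabled_iff_pin hc] at this
          push_neg at this
          exact_mod_cast this
        have eq1 := C.marking_eq h1 q
        rw [C.circuit_sum hc q] at eq1
        have eq2 := C.marking_eq hfa q
        rw [C.circuit_sum hc q] at eq2
        have houtc : (σ.count (C.out hc q) : ℤ) = (α.count (C.out hc q) : ℤ) := by
          rw [← hout]; exact_mod_cast heqt
        have hinnc : (σ.count (C.inn hc q) : ℤ) ≤ (α.count (C.inn hc q) : ℤ) := by
          exact_mod_cast ihc _
        have hpostnn : (0 : ℤ) ≤ (C.post (C.inn hc q) q : ℤ) := Int.natCast_nonneg _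
        have hmono := mul_le_mul_of_nonneg_left hinnc hpostnn
        have : (M1 q : ℤ) ≤ (Mhat q : ℤ) := by
          rw [eq1, eq2, houtc]
          linarith
        linarith
      rcases eq_or_ne u t with rfl | hne
      · have h3 : (σ ++ [u]).count u = σ.count u + 1 := by simp
        omega
      · have h3 : (σ ++ [t]).count u = σ.count u := by
          rw [List.count_append, List.count_singleton', if_neg (Ne.symm hne)]; omega
        have h4 := ihc u
        omega

end Circuit3

end PetriNet
namespace PetriNet

lemma count_indep {α : Type} (i1 i2 : BEq α) (h1 : @LawfulBEq α i1) (h2 : @LawfulBEq α i2)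
    (a : α) (l : List α) : @List.count α i1 a l = @List.count α i2 a l := by
  induction l with
  | nil => rfl
  | cons b l ih =>
      rw [@List.count_cons α i1, @List.count_cons α i2, ih]
      rcases eq_or_ne b a with rfl | hne
      · rw [if_pos h1.rfl, if_pos h2.rfl]
      · rw [if_neg (fun hh => hne (h1.eq_of_beq hh)), if_neg (fun hh => hne (h2.eq_of_beq hh))]

end PetriNet
namespace PetriNet

variable {P T : Type}

lemma count_flatMap_replicate {α β : Type} [DecidableEq α] [DecidableEq β]
    (f : α → β) (hf : Function.Injective f) (a : α → ℕ) :
    ∀ (l : List α) (u : α), u ∈ l →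
      a u + 1 ≤ (l.flatMap fun v => List.replicate (a v + 1) (f v)).count (f u) := by
  intro l
  induction l with
  | nil => intro u hu; simp at hu
  | cons v l ih =>
      intro u hu
      rw [List.flatMap_cons, List.count_append]
      rcases List.mem_cons.1 hu with rfl | hu
      · have : (List.replicate (a u + 1) (f u)).count (f u) = a u + 1 := by
          simp [List.count_replicate]
        omega
      · have := ih u hu
        omega

lemma dirB [Fintype P] [Fintype T] (N : PetriNet P T) (M0 : P → ℕ) (hl : N.live M0)
    (D : Finset P) (hcirc : (N.psubnet D).isCircuitNet) :
    (N.psubnet D).live (fun p => M0 p.1) := by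
  intro t M hM
  by_contra hcon
  push_neg at hcon
  have hdead : ∀ M', (N.psubnet D).reachable M M' → ¬ (N.psubnet D).enabled M' t := by
    intro M' hr he
    exact (hcon M' hr) he
  obtain ⟨Mhat, hreach, hdl⟩ := (N.psubnet D).circuit_dead_deadlock hcirc M t hdead
  have hMM : (N.psubnet D).reachable (fun p => M0 p.1) Mhat :=
    (N.psubnet D).reachable_trans hM hreach
  obtain ⟨α, hfa⟩ := hMM
  have hbound := (N.psubnet D).deadlock_count_bound hcirc _ α Mhat hfa hdl
  set L : List T :=
    (Finset.univ : Finset {t : T // N.adjT D t}).toList.flatMap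
      (fun v => List.replicate (α.count v + 1) v.1) with hL
  obtain ⟨σ, M', hfσ, hcnt⟩ := N.live_pump hl L M0 (N.reachable_refl M0)
  have hpf := N.proj_feasible (D := D) hfσ
  have hb := hbound (N.proj D σ) _ hpf t
  have hb2 : List.count t (N.proj D σ) ≤ List.count t α :=
    le_of_eq_of_le (count_indep _ _ inferInstance inferInstance t _)
      (le_of_le_of_eq hb (count_indep _ _ inferInstance inferInstance t _))
  rw [N.proj_count] at hb2
  have hLcnt : α.count t + 1 ≤ L.count t.1 := by
    refine count_flatMap_replicate (fun v : {t : T // N.adjT D t} => v.1)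
      (fun a b h => Subtype.ext h) (fun v => α.count v) _ t ?_
    simp [Finset.mem_toList]
  have h5 := hcnt t.1
  omega

end PetriNet
namespace PetriNet

variable {P T : Type} [Fintype P] [Fintype T]

section DirA

variable (N : PetriNet P T)

/-- the (unique) input transition of a place -/
noncomputable def tin (hnosrc : ∀ p : P, ∃ t : T, 0 < N.post t p) (p : P) : T :=
  Classical.choose (hnosrc p)

lemma tin_pos (hnosrc : ∀ p : P, ∃ t : T, 0 < N.post t p) (p : P) :
    0 < N.post (N.tin hnosrc p) p := Classical.choose_spec (hnosrc p)

lemma tin_eq (hwmg : N.isWMGle) (hnosrc : ∀ p : P, ∃ t : T, 0 < N.post t p)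
    {p : P} {t : T} (h : 0 < N.post t p) : t = N.tin hnosrc p :=
  N.wmg_in_unique hwmg h (N.tin_pos hnosrc p)

/-- the set of transitions dead at `M` -/
noncomputable def dset (M : P → ℕ) : Finset T :=
  Finset.univ.filter fun t => ∀ M', N.reachable M M' → ¬ N.enabled M' t

lemma dset_spec {M : P → ℕ} {t : T} :
    t ∈ N.dset M ↔ ∀ M', N.reachable M M' → ¬ N.enabled M' t := by
  simp [dset]

lemma dset_mono {M M' : P → ℕ} (h : N.reachable M M') : N.dset M ⊆ N.dset M' := by
  intro t ht
  rw [dset_spec] at ht ⊢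
  intro M'' h2
  exact ht M'' (N.reachable_trans h h2)

lemma key_place (hwmg : N.isWMGle) (hnosrc : ∀ p : P, ∃ t : T, 0 < N.post t p)
    (M1 : P → ℕ) (hstab : ∀ M', N.reachable M1 M' → N.dset M' = N.dset M1)
    (t : T) (ht : t ∈ N.dset M1) :
    ∃ p, 0 < N.pre p t ∧ N.tin hnosrc p ∈ N.dset M1 ∧ M1 p < N.pre p t := by
  by_contra hcon
  push_neg at hcon
  -- places consumed by a dead transition are nondecreasing
  have nondec : ∀ (p : P), 0 < N.pre p t → ∀ M' M'', N.reachable M1 M' →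
      N.reachable M' M'' → M' p ≤ M'' p := by
    intro p hp M' M'' h1 h2
    obtain ⟨σ, hσ⟩ := h2
    refine N.mono_place p (fun u hu => ?_) hσ
    by_contra hu0
    have hut : u = t := N.wmg_out_unique hwmg (Nat.pos_of_ne_zero hu0) hp
    have htd : t ∈ N.dset M' := by rw [hstab M' h1]; exact ht
    rw [dset_spec] at htd
    exact (N.dead_not_mem htd hσ) (hut ▸ hu)
  -- pumping a single pre-place whose feeder is not dead
  have pump1 : ∀ (p : P), 0 < N.pre p t → N.tin hnosrc p ∉ N.dset M1 →
      ∀ (k : ℕ) (M' : P → ℕ), N.reachable M1 M' →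
        ∃ M'', N.reachable M' M'' ∧ N.reachable M1 M'' ∧ k ≤ M'' p := by
    intro p hp hnin k
    induction k with
    | zero => intro M' h1; exact ⟨M', N.reachable_refl M', h1, Nat.zero_le _⟩
    | succ k ih =>
        intro M' h1
        obtain ⟨M'', h2, h3, h4⟩ := ih M' h1
        have hnd : N.tin hnosrc p ∉ N.dset M'' := by rw [hstab M'' h3]; exact hnin
        rw [dset_spec] at hnd
        push_neg at hnd
        obtain ⟨M3, h5, h6⟩ := hnd
        have h7 : M'' p ≤ M3 p := nondec p hp M'' M3 h3 h5
        set M4 := N.fire M3 (N.tin hnosrc p) with hM4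
        have h8 : N.reachable M3 M4 := N.reachable_fire h6
        have hpre0 : N.pre p (N.tin hnosrc p) = 0 := by
          by_contra hx
          have := N.wmg_out_unique hwmg (Nat.pos_of_ne_zero hx) hp
          rw [this] at hnin
          exact hnin ht
        have h9 : k + 1 ≤ M4 p := by
          have : M4 p = M3 p - N.pre p (N.tin hnosrc p) + N.post (N.tin hnosrc p) p := rfl
          have hpos := N.tin_pos hnosrc p
          omega
        refine ⟨M4, ?_, ?_, h9⟩
        · exact N.reachable_trans h2 (N.reachable_trans h5 h8)
        · exact N.reachable_trans h3 (N.reachable_trans h5 h8)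
  -- pump all pre-places in a list
  have pumpall : ∀ (l : List P),
      ∃ M'', N.reachable M1 M'' ∧ ∀ p ∈ l, 0 < N.pre p t → N.pre p t ≤ M'' p := by
    intro l
    induction l with
    | nil => exact ⟨M1, N.reachable_refl M1, by simp⟩
    | cons p l ih =>
        obtain ⟨M'', h1, h2⟩ := ih
        by_cases hp : 0 < N.pre p t
        · by_cases hnin : N.tin hnosrc p ∈ N.dset M1
          · refine ⟨M'', h1, ?_⟩
            intro p' hp' hpre'
            rcases List.mem_cons.1 hp' with rfl | hmem
            · exact le_trans (hcon p' hpre' hnin)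
                (nondec p' hpre' M1 M'' (N.reachable_refl M1) h1)
            · exact h2 p' hmem hpre'
          · obtain ⟨M3, h3, h4, h5⟩ := pump1 p hp hnin (N.pre p t) M'' h1
            refine ⟨M3, h4, ?_⟩
            intro p' hp' hpre'
            rcases List.mem_cons.1 hp' with rfl | hmem
            · exact h5
            · exact le_trans (h2 p' hmem hpre') (nondec p' hpre' M'' M3 h1 h3)
        · refine ⟨M'', h1, ?_⟩
          intro p' hp' hpre'
          rcases List.mem_cons.1 hp' with rfl | hmem
          · exact absurd hpre' hp
          · exact h2 p' hmem hpre'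
  obtain ⟨M'', h1, h2⟩ := pumpall Finset.univ.toList
  have htd : t ∈ N.dset M'' := by rw [hstab M'' h1]; exact ht
  rw [dset_spec] at htd
  refine htd M'' (N.reachable_refl M'') ?_
  intro p
  by_cases hp : 0 < N.pre p t
  · exact h2 p (by simp [Finset.mem_toList]) hp
  · omega

end DirA

end PetriNet
namespace PetriNet

variable {P T : Type}

lemma deadlock_no_move (C : PetriNet P T) {M : P → ℕ} (h : ∀ u, ¬ C.enabled M u)
    {M' : P → ℕ} (hr : C.reachable M M') : M' = M := by
  obtain ⟨σ, hf⟩ := hr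
  cases σ with
  | nil => exact hf
  | cons u σ => exact absurd hf.1 (h u)

lemma dirA [Fintype P] [Fintype T] (N : PetriNet P T) (M0 : P → ℕ)
    (hwmg : N.isWMGle) (hnosrc : ∀ p : P, ∃ t : T, 0 < N.post t p)
    (hall : ∀ D : Finset P, (N.psubnet D).isCircuitNet →
      (N.psubnet D).live (fun p => M0 p.1)) :
    N.live M0 := by
  by_contra hnl
  unfold live at hnl
  push_neg at hnl
  obtain ⟨tstar, Mr, hMr, hdead⟩ := hnl
  have hdead' : ∀ M', N.reachable Mr M' → ¬ N.enabled M' tstar := by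
    intro M' h1 h2
    exact (hdead M' h1) h2
  -- a marking with a maximal (hence stable) dead set
  set S : Set ℕ := {n | ∃ M', N.reachable Mr M' ∧ (N.dset M').card = n} with hS
  have hS0 : (N.dset Mr).card ∈ S := ⟨Mr, N.reachable_refl Mr, rfl⟩
  have hbdd : BddAbove S := by
    refine ⟨Fintype.card T, ?_⟩
    rintro k ⟨M', _, rfl⟩
    exact (Finset.card_le_univ _).trans_eq Finset.card_univ
  obtain ⟨M1, hM1r, hM1c⟩ := Nat.sSup_mem ⟨_, hS0⟩ hbdd
  have hstab : ∀ M', N.reachable M1 M' → N.dset M' = N.dset M1 := by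
    intro M' h
    refine (Finset.eq_of_subset_of_card_le (N.dset_mono h) ?_).symm
    have hmem : (N.dset M').card ∈ S := ⟨M', N.reachable_trans hM1r h, rfl⟩
    rw [hM1c]
    exact le_csSup hbdd hmem
  have htstar : tstar ∈ N.dset M1 := N.dset_mono hM1r (N.dset_spec.mpr hdead')
  -- the key-place choice function on dead transitions
  have hkey : ∀ t : {t : T // t ∈ N.dset M1}, ∃ p, 0 < N.pre p t.1 ∧
      N.tin hnosrc p ∈ N.dset M1 ∧ M1 p < N.pre p t.1 :=
    fun t => N.key_place hwmg hnosrc M1 hstab t.1 t.2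
  choose pl hq1' hq2' hq3' using hkey
  set f : {t : T // t ∈ N.dset M1} → {t : T // t ∈ N.dset M1} :=
    fun t => ⟨N.tin hnosrc (pl t), hq2' t⟩ with hf
  set x : {t : T // t ∈ N.dset M1} := ⟨tstar, htstar⟩ with hx
  -- find a cycle of f
  have hpigeon : ∃ i j : ℕ, i < j ∧ f^[i] x = f^[j] x := by
    obtain ⟨a, b, hab, hg⟩ := Fintype.exists_ne_map_eq_of_card_lt
      (fun n : Fin (Fintype.card {t : T // t ∈ N.dset M1} + 1) => f^[n.1] x)
      (by simp)
    rcases lt_trichotomy a.1 b.1 with h | h | h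
    · exact ⟨a.1, b.1, h, hg⟩
    · exact absurd (Fin.ext h) hab
    · exact ⟨b.1, a.1, h, hg.symm⟩
  obtain ⟨i0, j0, hij0, heq0⟩ := hpigeon
  have hex : ∃ k, 0 < k ∧ f^[k] (f^[i0] x) = f^[i0] x := by
    refine ⟨j0 - i0, by omega, ?_⟩
    rw [← Function.iterate_add_apply]
    have : j0 - i0 + i0 = j0 := by omega
    rw [this, ← heq0]
  set s := f^[i0] x with hs
  set k0 := Nat.find hex with hk0def
  obtain ⟨k0pos, hk0⟩ : 0 < k0 ∧ f^[k0] s = s := Nat.find_spec hex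
  set ct : ℕ → {t : T // t ∈ N.dset M1} := fun n => f^[n] s with hct
  have ct_per : ∀ n, ct (n + k0) = ct n := by
    intro n
    show f^[n + k0] s = f^[n] s
    rw [Function.iterate_add_apply, hk0]
  have ct_mul : ∀ c n, ct (n + k0 * c) = ct n := by
    intro c
    induction c with
    | zero => simp
    | succ c ih =>
        intro n
        have : n + k0 * (c + 1) = (n + k0 * c) + k0 := by ring
        rw [this, ct_per, ih]
  have ct_mod : ∀ n, ct n = ct (n % k0) := by
    intro n
    conv_lhs => rw [show n = n % k0 + k0 * (n / k0) from (Nat.mod_add_div n k0).symm]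
    rw [ct_mul]
  have ct_inj : ∀ i j, i < k0 → j < k0 → ct i = ct j → i = j := by
    have aux : ∀ i j, i < j → j < k0 → ct i = ct j → False := by
      intro i j hij hj he
      have h1 : ct (k0 - j + i) = s := by
        show f^[k0 - j + i] s = s
        rw [Function.iterate_add_apply]
        show f^[k0 - j] (ct i) = s
        rw [he]
        show f^[k0 - j] (f^[j] s) = s
        rw [← Function.iterate_add_apply]
        have : k0 - j + j = k0 := by omega
        rw [this, hk0]
      have := Nat.find_min hex (m := k0 - j + i) (by omega)
      push_neg at this
      exact absurd h1 (by
        intro hcc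
        exact (this (by omega)) hcc)
    intro i j hi hj he
    rcases lt_trichotomy i j with h | h | h
    · exact absurd he (fun hc => aux i j h hj hc)
    · exact h
    · exact absurd he.symm (fun hc => aux j i h hi hc)
  set q : ℕ → P := fun n => pl (ct n) with hqdef
  have hq1 : ∀ n, 0 < N.pre (q n) (ct n).1 := fun n => hq1' (ct n)
  have hq3 : ∀ n, M1 (q n) < N.pre (q n) (ct n).1 := fun n => hq3' (ct n)
  have hq2 : ∀ n, (ct (n + 1)).1 = N.tin hnosrc (q n) := by
    intro n
    show (f^[n + 1] s).1 = _
    rw [Function.iterate_succ_apply']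
  have hq4 : ∀ n, 0 < N.post ((ct (n + 1)).1) (q n) := by
    intro n
    rw [hq2]
    exact N.tin_pos hnosrc (q n)
  have ct1_inj : ∀ i j, i < k0 → j < k0 → ct (i + 1) = ct (j + 1) → i = j := by
    intro i j hi hj he
    have h1 : ct ((i + 1) % k0) = ct ((j + 1) % k0) := by
      rw [← ct_mod, ← ct_mod, he]
    have h2 := ct_inj _ _ (Nat.mod_lt _ k0pos) (Nat.mod_lt _ k0pos) h1
    have hi1 : i + 1 ≤ k0 := hi
    have hj1 : j + 1 ≤ k0 := hj
    rcases eq_or_lt_of_le hi1 with hie | hil <;> rcases eq_or_lt_of_le hj1 with hje | hjl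
    · omega
    · rw [hie, Nat.mod_self] at h2
      rw [Nat.mod_eq_of_lt hjl] at h2
      omega
    · rw [hje, Nat.mod_self] at h2
      rw [Nat.mod_eq_of_lt hil] at h2
      omega
    · rw [Nat.mod_eq_of_lt hil, Nat.mod_eq_of_lt hjl] at h2
      omega
  set D : Finset P := (Finset.range k0).image q with hD
  have hd_mem : ∀ p : P, p ∈ D ↔ ∃ i, i < k0 ∧ q i = p := by
    intro p
    simp [hD, Finset.mem_image, Finset.mem_range]
  have hq_mem : ∀ n, q n ∈ D := by
    intro n
    rw [hd_mem]
    exact ⟨n % k0, Nat.mod_lt _ k0pos, by rw [hqdef]; simp only []; rw [← ct_mod]⟩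
  have adj_of : ∀ n, N.adjT D ((ct n).1) :=
    fun n => ⟨q n, hq_mem n, Or.inl (hq1 n)⟩
  have of_adj : ∀ u, N.adjT D u → ∃ i, i < k0 ∧ u = (ct i).1 := by
    rintro u ⟨p, hp, hor⟩
    obtain ⟨i, hik, rfl⟩ := (hd_mem p).mp hp
    rcases hor with hpre | hpost
    · exact ⟨i, hik, N.wmg_out_unique hwmg hpre (hq1 i)⟩
    · have h1 : u = N.tin hnosrc (q i) := N.tin_eq hwmg hnosrc hpost
      refine ⟨(i + 1) % k0, Nat.mod_lt _ k0pos, ?_⟩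
      rw [h1, ← hq2 i]
      rw [ct_mod (i + 1)]
  -- nodes of the subnet
  set Tn : ℕ → {t : T // N.adjT D t} := fun n => ⟨(ct n).1, adj_of n⟩ with hTn
  set Pn : ℕ → {p : P // p ∈ D} := fun n => ⟨q n, hq_mem n⟩ with hPn
  have Tn_per : ∀ n c, Tn (n + k0 * c) = Tn n := by
    intro n c
    apply Subtype.ext
    show (ct (n + k0 * c)).1 = (ct n).1
    rw [ct_mul]
  -- the subnet is a circuit
  have hcirc : (N.psubnet D).isCircuitNet := by
    refine ⟨⟨Sum.inr (Tn 0)⟩, ?_, ?_, ?_⟩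
    · -- strong connectivity
      have arcTP : ∀ n, (N.psubnet D).arc (Sum.inr (Tn (n + 1))) (Sum.inl (Pn n)) := by
        intro n
        exact hq4 n
      have arcPT : ∀ n, (N.psubnet D).arc (Sum.inl (Pn n)) (Sum.inr (Tn n)) := by
        intro n
        exact hq1 n
      have down : ∀ n m, Relation.ReflTransGen (N.psubnet D).arc
          (Sum.inr (Tn (n + m))) (Sum.inr (Tn n)) := by
        intro n m
        induction m with
        | zero => exact Relation.ReflTransGen.refl
        | succ m ih =>
            exact Relation.ReflTransGen.head (arcTP (n + m))
              (Relation.ReflTransGen.head (arcPT (n + m)) ih)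
      have TT : ∀ a b, Relation.ReflTransGen (N.psubnet D).arc
          (Sum.inr (Tn a)) (Sum.inr (Tn b)) := by
        intro a b
        have h1 : b + (a + k0 * b - b) = a + k0 * b := by
          have : b ≤ k0 * b := Nat.le_mul_of_pos_left b k0pos
          omega
        have h2 := down b (a + k0 * b - b)
        rw [h1, Tn_per] at h2
        exact h2
      have node_repr : ∀ z : {p : P // p ∈ D} ⊕ {t : T // N.adjT D t},
          (∃ i, i < k0 ∧ z = Sum.inl (Pn i)) ∨ (∃ i, i < k0 ∧ z = Sum.inr (Tn i)) := by
        rintro (⟨p, hp⟩ | ⟨u, hu⟩)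
        · obtain ⟨i, hik, hqi⟩ := (hd_mem p).mp hp
          exact Or.inl ⟨i, hik, by rw [hPn]; exact congrArg Sum.inl (Subtype.ext hqi.symm)⟩
        · obtain ⟨i, hik, hui⟩ := of_adj u hu
          exact Or.inr ⟨i, hik, by rw [hTn]; exact congrArg Sum.inr (Subtype.ext hui)⟩
      intro z w
      rcases node_repr z with ⟨i, _, rfl⟩ | ⟨i, _, rfl⟩ <;>
        rcases node_repr w with ⟨j, _, rfl⟩ | ⟨j, _, rfl⟩
      · exact Relation.ReflTransGen.head (arcPT i)
          (Relation.ReflTransGen.tail (TT i (j + 1)) (arcTP j))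
      · exact Relation.ReflTransGen.head (arcPT i) (TT i j)
      · exact Relation.ReflTransGen.tail (TT i (j + 1)) (arcTP j)
      · exact TT i j
    · -- place degrees
      rintro ⟨p, hp⟩
      obtain ⟨i, hik, hqi⟩ := (hd_mem p).mp hp
      have hpe : (⟨p, hp⟩ : {p : P // p ∈ D}) = Pn i := Subtype.ext hqi.symm
      rw [hpe]
      constructor
      · refine Finset.card_eq_one.mpr ⟨Tn (i + 1), ?_⟩
        ext u
        simp only [placePre, Finset.mem_filter, Finset.mem_univ, true_and,
          Finset.mem_singleton]
        constructor
        · intro hu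
          apply Subtype.ext
          show u.1 = (ct (i + 1)).1
          rw [hq2 i]
          exact N.tin_eq hwmg hnosrc hu
        · rintro rfl
          exact hq4 i
      · refine Finset.card_eq_one.mpr ⟨Tn i, ?_⟩
        ext u
        simp only [placePost, Finset.mem_filter, Finset.mem_univ, true_and,
          Finset.mem_singleton]
        constructor
        · intro hu
          apply Subtype.ext
          show u.1 = (ct i).1
          exact N.wmg_out_unique hwmg hu (hq1 i)
        · rintro rfl
          exact hq1 i
    · -- transition degrees
      rintro ⟨u, hu⟩
      obtain ⟨i, hik, hui⟩ := of_adj u hu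
      have hue : (⟨u, hu⟩ : {t : T // N.adjT D t}) = Tn i := Subtype.ext hui
      rw [hue]
      constructor
      · refine Finset.card_eq_one.mpr ⟨Pn i, ?_⟩
        ext p'
        simp only [transPre, Finset.mem_filter, Finset.mem_univ, true_and,
          Finset.mem_singleton]
        constructor
        · intro hpp
          obtain ⟨j, hjk, hqj⟩ := (hd_mem p'.1).mp p'.2
          have h1 : 0 < N.pre (q j) ((ct i).1) := by rw [hqj]; exact hpp
          have h2 : (ct i).1 = (ct j).1 := N.wmg_out_unique hwmg h1 (hq1 j)
          have h3 : i = j := ct_inj i j hik hjk (Subtype.ext h2)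
          apply Subtype.ext
          rw [← hqj, h3]
        · rintro rfl
          exact hq1 i
      · set j1 : ℕ := if i = 0 then k0 - 1 else i - 1 with hj1
        have hj1k : j1 < k0 := by rw [hj1]; split <;> omega
        have hj1s : ct (j1 + 1) = ct i := by
          rw [hj1]
          split
          · rename_i hh
            rw [hh]
            have : k0 - 1 + 1 = k0 := by omega
            rw [this]
            show f^[k0] s = f^[0] s
            rw [hk0]
            rfl
          · rename_i hh
            have : i - 1 + 1 = i := by omega
            rw [this]
        refine Finset.card_eq_one.mpr ⟨Pn j1, ?_⟩
        ext p'
        simp only [transPost, Finset.mem_filter, Finset.mem_univ, true_and,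
          Finset.mem_singleton]
        constructor
        · intro hpp
          obtain ⟨j, hjk, hqj⟩ := (hd_mem p'.1).mp p'.2
          have h1 : 0 < N.post ((ct i).1) (q j) := by rw [hqj]; exact hpp
          have h2 : (ct i).1 = N.tin hnosrc (q j) := N.tin_eq hwmg hnosrc h1
          have h3 : ct (j + 1) = ct (j1 + 1) := by
            rw [hj1s]
            apply Subtype.ext
            rw [hq2 j, ← h2]
          have h4 : j = j1 := ct1_inj j j1 hjk hj1k h3
          apply Subtype.ext
          rw [← hqj, h4]
        · rintro rfl
          show 0 < N.post ((ct i).1) (q j1)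
          rw [← hj1s]
          exact hq4 j1
  -- the restricted marking of M1 is a deadlock of the subnet
  have hdl : ∀ u : {t : T // N.adjT D t}, ¬ (N.psubnet D).enabled (restr D M1) u := by
    intro u hen
    obtain ⟨i, hik, hui⟩ := of_adj u.1 u.2
    have := hen ⟨q i, hq_mem i⟩
    have h1 : N.pre (q i) u.1 ≤ M1 (q i) := this
    rw [hui] at h1
    exact absurd h1 (by have := hq3 i; omega)
  -- contradiction with liveness of the circuit subsystem
  have hlive := hall D hcirc
  have hreachM1 : (N.psubnet D).reachable (fun p => M0 p.1) (restr D M1) :=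
    N.proj_reachable (N.reachable_trans hMr hM1r)
  obtain ⟨M'', hr'', hen''⟩ := hlive (Tn 0) (restr D M1) hreachM1
  rw [(N.psubnet D).deadlock_no_move hdl hr''] at hen''
  exact hdl (Tn 0) hen''

end PetriNet
/-- A WMG≤ system without source places is live iff every elementary circuit
P-subsystem of it is live. -/
theorem stmt5 {P T : Type} [Fintype P] [Fintype T]
    (N : PetriNet P T) (M0 : P → ℕ)
    (hwmg : N.isWMGle) (hnosrc : ∀ p : P, ∃ t : T, 0 < N.post t p) :
    N.live M0 ↔
      ∀ D : Finset P, (N.psubnet D).isCircuitNet →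
        (N.psubnet D).live (fun p => M0 p.1) := by
  constructor
  · intro hl D hcirc
    exact N.dirB M0 hl D hcirc
  · intro hall
    exact N.dirA M0 hwmg hnosrc hall
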